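/- Let D be a digraph on a finite vertex type V and let k ≥ 2. For v, w ∈ V write v ≈ w when there is a directed walk from v to w and a directed walk from w to v (reflexive-transitive closure of adjacency in both directions); ≈ is an equivalence relation, and the strong components of D are the subdigraphs induced on its equivalence classes. Then D is k-Always Winnable if and only if every strong component of D is k-Always Winnable. -/

import Mathlib

open scoped Classical

/-- A digraph (given by its domination relation `adj`) is `k`-Always Winnable if every labeling
of the vertices by `ZMod k` can be toggled to the zero labeling: `x v` records the number of
times vertex `v` is toggled. -/
def kAW {V : Type*} [Fintype V] (adj : V → V → Prop) (k : ℕ) : Prop :=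
  ∀ lam : V → ZMod k, ∃ x : V → ZMod k, ∀ v : V,
    lam v + x v + ∑ u ∈ Finset.univ.filter (fun u => adj u v), x u = 0

/-- `v` and `w` are in the same strong component: there is a directed walk from `v` to `w`
and one from `w` to `v`. -/
def sameStrongComp {V : Type*} (adj : V → V → Prop) (v w : V) : Prop :=
  Relation.ReflTransGen adj v w ∧ Relation.ReflTransGen adj w v

section Aux

variable {V : Type*} (adj : V → V → Prop)

/-- The setoid of strong components. -/
def sscSetoid : Setoid V :=
  ⟨sameStrongComp adj,
    ⟨fun _ => ⟨Relation.ReflTransGen.refl, Relation.ReflTransGen.refl⟩,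
     fun h => ⟨h.2, h.1⟩,
     fun h1 h2 => ⟨h1.1.trans h2.1, h2.2.trans h1.2⟩⟩⟩

/-- Reverse-reachability partial order on the strong components. -/
instance sscOrder : PartialOrder (Quotient (sscSetoid adj)) where
  le q₁ q₂ := Quotient.liftOn₂ q₁ q₂ (fun a b => Relation.ReflTransGen adj b a)
    (fun _ _ _ _ ha hb => propext
      ⟨fun h => hb.2.trans (h.trans ha.1), fun h => hb.1.trans (h.trans ha.2)⟩)
  le_refl q := by
    induction q using Quotient.ind
    exact Relation.ReflTransGen.refl
  le_trans q₁ q₂ q₃ := by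
    induction q₁ using Quotient.ind
    induction q₂ using Quotient.ind
    induction q₃ using Quotient.ind
    exact fun h1 h2 => Relation.ReflTransGen.trans h2 h1
  le_antisymm q₁ q₂ := by
    induction q₁ using Quotient.ind
    induction q₂ using Quotient.ind
    exact fun h1 h2 => Quotient.sound ⟨h2, h1⟩

/-- A labelling of the vertices by elements of a linear order, constant exactly on strong
components and antitone along arcs. -/
noncomputable def compLabel (v : V) : LinearExtension (Quotient (sscSetoid adj)) :=
  toLinearExtension (Quotient.mk (sscSetoid adj) v)

lemma compLabel_eq_iff {u v : V} :
    compLabel adj u = compLabel adj v ↔ sameStrongComp adj u v := by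
  constructor
  · intro h
    exact Quotient.exact
      (show Quotient.mk (sscSetoid adj) u = Quotient.mk (sscSetoid adj) v from h)
  · intro h
    exact congrArg toLinearExtension (Quotient.sound h)

lemma compLabel_le {u v : V} (h : Relation.ReflTransGen adj u v) :
    compLabel adj v ≤ compLabel adj u :=
  toLinearExtension.monotone (by
    change Quotient.liftOn₂ (Quotient.mk (sscSetoid adj) v) (Quotient.mk (sscSetoid adj) u)
      (fun a b => Relation.ReflTransGen adj b a) _
    exact h)

variable [Fintype V]

/-- The matrix of the `k`-lights-out game. -/
noncomputable def awMatrix (k : ℕ) : Matrix V V (ZMod k) :=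
  Matrix.of fun v u => if v = u then 1 else if adj u v then 1 else 0

lemma awMatrix_mulVec (hirr : ∀ v : V, ¬ adj v v) (k : ℕ) (x : V → ZMod k) (v : V) :
    (awMatrix adj k).mulVec x v
      = x v + ∑ u ∈ Finset.univ.filter (fun u => adj u v), x u := by
  have key : ∀ u : V, awMatrix adj k v u * x u
      = (if v = u then x u else 0) + (if adj u v then x u else 0) := by
    intro u
    by_cases h : v = u
    · subst h
      simp [awMatrix, hirr v]
    · by_cases h2 : adj u v <;> simp [awMatrix, h, h2]
  simp only [Matrix.mulVec, dotProduct, key, Finset.sum_add_distrib,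
    Finset.sum_ite_eq, Finset.mem_univ, if_true, Finset.sum_filter]

lemma kAW_iff_isUnit_det (hirr : ∀ v : V, ¬ adj v v) (k : ℕ) :
    kAW adj k ↔ IsUnit (awMatrix adj k).det := by
  rw [← Matrix.isUnit_iff_isUnit_det, ← Matrix.mulVec_surjective_iff_isUnit]
  constructor
  · intro h y
    obtain ⟨x, hx⟩ := h (-y)
    refine ⟨x, funext fun v => ?_⟩
    have h2 := hx v
    simp only [Pi.neg_apply] at h2
    rw [awMatrix_mulVec adj hirr k x v]
    linear_combination h2
  · intro h lam
    obtain ⟨x, hx⟩ := h (-lam)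
    refine ⟨x, fun v => ?_⟩
    have h2 := congrFun hx v
    rw [awMatrix_mulVec adj hirr k x v] at h2
    simp only [Pi.neg_apply] at h2
    linear_combination h2

lemma awBT (k : ℕ) : (awMatrix adj k).BlockTriangular (compLabel adj) := by
  intro i j hij
  have h1 : ¬ i = j := fun h => by subst h; exact lt_irrefl _ hij
  have h2 : ¬ adj j i := fun h =>
    absurd hij (not_lt_of_ge (compLabel_le adj (Relation.ReflTransGen.single h)))
  simp [awMatrix, h1, h2]

lemma block_det_eq (k : ℕ) (v₀ : V) :
    ((awMatrix adj k).toSquareBlock (compLabel adj) (compLabel adj v₀)).det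
      = (awMatrix (fun a b : {w : V // sameStrongComp adj v₀ w} => adj a.1 b.1) k).det := by
  let e : {w : V // sameStrongComp adj v₀ w} ≃ {w : V // compLabel adj w = compLabel adj v₀} :=
    Equiv.subtypeEquivRight (fun w => by
      rw [compLabel_eq_iff]
      exact ⟨fun h => ⟨h.2, h.1⟩, fun h => ⟨h.2, h.1⟩⟩)
  have hmat : ((awMatrix adj k).toSquareBlock (compLabel adj)
        (compLabel adj v₀)).submatrix e e
      = awMatrix (fun a b : {w : V // sameStrongComp adj v₀ w} => adj a.1 b.1) k := by
    ext a c
    by_cases h : a = c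
    · subst h
      simp [awMatrix, Matrix.toSquareBlock_def, e]
    · have h' : (a : V) ≠ (c : V) := fun hh => h (Subtype.ext hh)
      simp [awMatrix, Matrix.toSquareBlock_def, h, h', e]
  rw [← Matrix.det_submatrix_equiv_self e, hmat]

lemma isUnit_finset_prod_iff {M ι : Type*} [CommMonoid M] (s : Finset ι) (f : ι → M) :
    IsUnit (∏ i ∈ s, f i) ↔ ∀ i ∈ s, IsUnit (f i) := by
  induction s using Finset.induction_on with
  | empty => simp
  | insert _ _ hnotmem ih =>
    rw [Finset.prod_insert hnotmem, IsUnit.mul_iff, ih]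
    simp [hnotmem]

end Aux

/-- A digraph is `k`-Always Winnable iff each of its strong components (the subdigraphs
induced on the equivalence classes of `sameStrongComp`) is `k`-Always Winnable. -/
theorem kAW_iff_strongComponents_kAW {V : Type*} [Fintype V]
    (adj : V → V → Prop) (hirr : ∀ v : V, ¬ adj v v) (k : ℕ) (hk : 2 ≤ k) :
    kAW adj k ↔
      ∀ v : V, kAW (fun a b : {w : V // sameStrongComp adj v w} => adj a.1 b.1) k := by
  rw [kAW_iff_isUnit_det adj hirr k, (awBT adj k).det, isUnit_finset_prod_iff]
  constructor
  · intro h v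
    have h1 := h _ (Finset.mem_image_of_mem (compLabel adj) (Finset.mem_univ v))
    rw [block_det_eq adj k v] at h1
    rw [kAW_iff_isUnit_det _ (fun a => hirr a.1) k]
    convert h1 using 2
    rfl
  · intro h a ha
    obtain ⟨v, -, rfl⟩ := Finset.mem_image.mp ha
    have h1 := h v
    rw [kAW_iff_isUnit_det _ (fun a => hirr a.1) k] at h1
    rw [block_det_eq adj k v]
    convert h1 using 2
    rfl
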